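/- Let H be a hypergraph and G its clique reduction, where each hyperedge e of rank r(e) ≥ 2 is replaced by a clique on its vertices with each clique-edge weight w(e)/(r(e)-1). Then for any vector f, fᵀ J_H f ≤ fᵀ J_G f, where fᵀ J_H f = Σ_e w(e)·(max_{u∈e} f(u) + min_{v∈e} f(v))² and fᵀ J_G f = Σ_e w(e)/(r(e)-1) · Σ_{{u,v}⊆e} (f(u)+f(v))². -/

import Mathlib

open Finset

private lemma sq_key {M m x : ℝ} (h1 : m ≤ x) (h2 : x ≤ M) :
    (M + m) ^ 2 ≤ (M + x) ^ 2 + (m + x) ^ 2 := by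
  nlinarith [mul_nonneg (sub_nonneg.2 h1) (sub_nonneg.2 h2), sq_nonneg x]

private lemma sum_offDiag_eq {V : Type*} [DecidableEq V] (e : Finset V) (f : V → ℝ) :
    ∑ p ∈ e.offDiag, (f p.1 + f p.2) ^ 2 = ∑ u ∈ e, ∑ v ∈ e.erase u, (f u + f v) ^ 2 := by
  rw [show e.offDiag = (e ×ˢ e).filter (fun a : V × V => a.1 ≠ a.2) by
    ext x; rw [Finset.mem_offDiag, Finset.mem_filter, Finset.mem_product, and_assoc], Finset.sum_filter, Finset.sum_product]
  refine Finset.sum_congr rfl fun u hu => ?_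
  rw [← Finset.sum_filter]
  refine Finset.sum_congr ?_ fun _ _ => rfl
  ext v
  simp only [Finset.mem_filter, Finset.mem_erase]
  tauto

private lemma edge_key {V : Type*} [DecidableEq V] (e : Finset V) (h2 : 2 ≤ e.card)
    (f : V → ℝ) (hne : e.Nonempty) :
    ((e.card : ℝ) - 1) * (e.sup' hne f + e.inf' hne f) ^ 2 ≤
      (1 / 2) * ∑ p ∈ e.offDiag, (f p.1 + f p.2) ^ 2 := by
  set M := e.sup' hne f with hM
  set m := e.inf' hne f with hm
  set K := (M + m) ^ 2 with hK
  obtain ⟨a, ha, hfa⟩ := e.exists_mem_eq_sup' hne f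
  obtain ⟨b0, hb0, hfb0⟩ := e.exists_mem_eq_inf' hne f
  rw [← hM] at hfa
  rw [← hm] at hfb0
  have hm_le : ∀ x ∈ e, m ≤ f x := fun x hx => Finset.inf'_le f hx
  have hM_ge : ∀ x ∈ e, f x ≤ M := fun x hx => Finset.le_sup' f hx
  obtain ⟨b, hb, hba, hfb⟩ : ∃ b ∈ e, b ≠ a ∧ f b = m := by
    by_cases hab : b0 = a
    · obtain ⟨c, hc, hca⟩ := Finset.exists_mem_ne (s := e) (by omega) a
      refine ⟨c, hc, hca, le_antisymm ?_ (hm_le c hc)⟩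
      calc f c ≤ M := hM_ge c hc
        _ = m := by rw [hfa, ← hab, ← hfb0]
    · exact ⟨b0, hb0, hab, hfb0.symm⟩
  have hab : a ≠ b := fun h => hba h.symm
  rw [sum_offDiag_eq]
  set R : V → ℝ := fun u => ∑ v ∈ e.erase u, (f u + f v) ^ 2 with hR
  have hb' : b ∈ e.erase a := Finset.mem_erase.2 ⟨hba, hb⟩
  have ha' : a ∈ e.erase b := Finset.mem_erase.2 ⟨hab, ha⟩
  set rest := (e.erase a).erase b with hrest
  have hsplit : ∑ u ∈ e, R u = R a + (R b + ∑ u ∈ rest, R u) := by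
    rw [Finset.add_sum_erase _ R hb', Finset.add_sum_erase _ R ha]
  have hcard : (rest.card : ℝ) = (e.card : ℝ) - 2 := by
    have : rest.card = e.card - 2 := by
      rw [hrest, Finset.card_erase_of_mem hb', Finset.card_erase_of_mem ha]
      omega
    rw [this, Nat.cast_sub h2]
    norm_num
  have hKnonneg : 0 ≤ K := sq_nonneg _
  -- bound for the other rows
  have hrow : ∀ u ∈ rest, K ≤ R u := by
    intro u hu
    have hub : u ≠ b := (Finset.mem_erase.1 hu).1
    have hu' : u ∈ e.erase a := (Finset.mem_erase.1 hu).2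
    have hua : u ≠ a := (Finset.mem_erase.1 hu').1
    have hue : u ∈ e := (Finset.mem_erase.1 hu').2
    have hsub : ({a, b} : Finset V) ⊆ e.erase u := by
      intro x hx
      rcases Finset.mem_insert.1 hx with rfl | hx
      · exact Finset.mem_erase.2 ⟨fun h => hua h.symm, ha⟩
      · rw [Finset.mem_singleton.1 hx]
        exact Finset.mem_erase.2 ⟨fun h => hub h.symm, hb⟩
    have hle : ∑ v ∈ ({a, b} : Finset V), (f u + f v) ^ 2 ≤ R u :=
      Finset.sum_le_sum_of_subset_of_nonneg hsub (fun _ _ _ => sq_nonneg _)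
    rw [Finset.sum_pair hab] at hle
    have key := sq_key (hm_le u hue) (hM_ge u hue)
    calc K = (M + m) ^ 2 := rfl
      _ ≤ (M + f u) ^ 2 + (m + f u) ^ 2 := key
      _ = (f u + f a) ^ 2 + (f u + f b) ^ 2 := by rw [hfa, ← hfb]; ring
      _ ≤ R u := hle
  -- rows a and b
  have hRa : R a = (f a + f b) ^ 2 + ∑ v ∈ rest, (f a + f v) ^ 2 := by
    rw [hR]
    exact (Finset.add_sum_erase _ _ hb').symm
  have hRb : R b = (f b + f a) ^ 2 + ∑ v ∈ rest, (f b + f v) ^ 2 := by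
    have hcomm : (e.erase b).erase a = rest := by
      rw [hrest, Finset.erase_right_comm]
    rw [hR, ← hcomm]
    exact (Finset.add_sum_erase _ _ ha').symm
  have hfab : (f a + f b) ^ 2 = K := by rw [← hfa, hfb]
  have hrests : (rest.card : ℝ) * K ≤ ∑ v ∈ rest, ((f a + f v) ^ 2 + (f b + f v) ^ 2) := by
    have : ∀ v ∈ rest, K ≤ (f a + f v) ^ 2 + (f b + f v) ^ 2 := by
      intro v hv
      have hve : v ∈ e := Finset.mem_erase.1 (Finset.mem_erase.1 hv).2 |>.2
      have key := sq_key (hm_le v hve) (hM_ge v hve)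
      calc K ≤ (M + f v) ^ 2 + (m + f v) ^ 2 := key
        _ = (f a + f v) ^ 2 + (f b + f v) ^ 2 := by rw [hfa, ← hfb]
    calc (rest.card : ℝ) * K = rest.card • K := by rw [nsmul_eq_mul]
      _ ≤ _ := Finset.card_nsmul_le_sum rest _ K this
  have hrestrow : (rest.card : ℝ) * K ≤ ∑ u ∈ rest, R u := by
    calc (rest.card : ℝ) * K = rest.card • K := by rw [nsmul_eq_mul]
      _ ≤ _ := Finset.card_nsmul_le_sum rest _ K hrow
  have hsum : ∑ v ∈ rest, ((f a + f v) ^ 2 + (f b + f v) ^ 2)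
      = ∑ v ∈ rest, (f a + f v) ^ 2 + ∑ v ∈ rest, (f b + f v) ^ 2 :=
    Finset.sum_add_distrib
  have hfba : (f b + f a) ^ 2 = K := by rw [← hfa, hfb]; ring
  have htotal : (2 * (e.card : ℝ) - 2) * K ≤ ∑ u ∈ e, R u := by
    rw [hsplit, hRa, hRb, hfab, hfba]
    have : (2 * (e.card : ℝ) - 2) * K
        = K + K + ((rest.card : ℝ) * K + (rest.card : ℝ) * K) := by
      rw [hcard]; ring
    rw [this]
    have h1 := hrests
    rw [hsum] at h1
    linarith
  linarith

theorem stmt_7 {V : Type*} [DecidableEq V] (E : Finset (Finset V))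
    (w : Finset V → ℝ) (hw : ∀ e ∈ E, 0 < w e)
    (hrank : ∀ e ∈ E, 2 ≤ e.card) (f : V → ℝ) :
    ∑ e ∈ E.attach,
        w e.1 * (e.1.sup' (Finset.card_pos.mp (by have := hrank e.1 e.2; omega)) f +
          e.1.inf' (Finset.card_pos.mp (by have := hrank e.1 e.2; omega)) f) ^ 2
      ≤ ∑ e ∈ E.attach,
          w e.1 / ((e.1.card : ℝ) - 1) *
            ((1 / 2) * ∑ p ∈ e.1.offDiag, (f p.1 + f p.2) ^ 2) := by
  refine Finset.sum_le_sum fun e _ => ?_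
  have h2 : 2 ≤ e.1.card := hrank e.1 e.2
  have hne : e.1.Nonempty := Finset.card_pos.mp (by omega)
  have hpos : (0 : ℝ) < (e.1.card : ℝ) - 1 := by
    have : (2 : ℝ) ≤ (e.1.card : ℝ) := by exact_mod_cast h2
    linarith
  have hwpos := hw e.1 e.2
  have hk := edge_key e.1 h2 f hne
  calc w e.1 * (e.1.sup' _ f + e.1.inf' _ f) ^ 2
      = w e.1 / ((e.1.card : ℝ) - 1) *
        (((e.1.card : ℝ) - 1) * (e.1.sup' hne f + e.1.inf' hne f) ^ 2) := by
        field_simp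
    _ ≤ w e.1 / ((e.1.card : ℝ) - 1) *
        ((1 / 2) * ∑ p ∈ e.1.offDiag, (f p.1 + f p.2) ^ 2) := by
        apply mul_le_mul_of_nonneg_left hk (by positivity)
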